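/- arXiv:2301.03041 — 2 statements merged into one kernel-verified Lean document; each statement's English description precedes it below -/
import Mathlib

section
/- For the similarity loss L = −⟨q̃₁, z̃₂⟩ with q̃₁ = q₁/‖q₁‖ and z̃₂ fixed of unit norm, the squared norm of the gradient with respect to q₁ equals (1 − ⟨q̃₁, z̃₂⟩²)/‖q₁‖², and hence is at most 1/‖q₁‖². -/
open RealInnerProductSpace

theorem stmt_5 {C : ℕ} (q₁ z₂ : EuclideanSpace ℝ (Fin C)) (hq : q₁ ≠ 0)
    (hz : ‖z₂‖ = 1) :
    ‖gradient (fun q : EuclideanSpace ℝ (Fin C) => -⟪‖q‖⁻¹ • q, z₂⟫) q₁‖ ^ 2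
        = (1 / ‖q₁‖ ^ 2) * (1 - ⟪‖q₁‖⁻¹ • q₁, z₂⟫ ^ 2) ∧
      ‖gradient (fun q : EuclideanSpace ℝ (Fin C) => -⟪‖q‖⁻¹ • q, z₂⟫) q₁‖ ^ 2
        ≤ 1 / ‖q₁‖ ^ 2 := by
  have hn : ‖q₁‖ ≠ 0 := norm_ne_zero_iff.mpr hq
  have hnpos : (0:ℝ) < ‖q₁‖ := norm_pos_iff.mpr hq
  set t : ℝ := ⟪q₁, q₁⟫
  have ht : t = ‖q₁‖ * ‖q₁‖ := real_inner_self_eq_norm_mul_norm q₁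
  have ht0 : t ≠ 0 := by rw [ht]; positivity
  have hsqrt_t : Real.sqrt t = ‖q₁‖ := by
    rw [ht, Real.sqrt_mul_self (norm_nonneg _)]
  -- derivative of q ↦ ⟪q, q⟫
  have hsq : HasFDerivAt (fun q : EuclideanSpace ℝ (Fin C) => ⟪q, q⟫)
      ((fderivInnerCLM ℝ (q₁, q₁)).comp
        ((ContinuousLinearMap.id ℝ (EuclideanSpace ℝ (Fin C))).prod (ContinuousLinearMap.id ℝ (EuclideanSpace ℝ (Fin C))))) q₁ :=
    (hasFDerivAt_id q₁).inner ℝ (hasFDerivAt_id q₁)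
  -- derivative of q ↦ √⟪q, q⟫ = ‖q‖
  have hnorm : HasFDerivAt (fun q : EuclideanSpace ℝ (Fin C) => Real.sqrt ⟪q, q⟫)
      ((1 / (2 * Real.sqrt t)) •
        ((fderivInnerCLM ℝ (q₁, q₁)).comp
          ((ContinuousLinearMap.id ℝ (EuclideanSpace ℝ (Fin C))).prod (ContinuousLinearMap.id ℝ (EuclideanSpace ℝ (Fin C)))))) q₁ :=
    (Real.hasDerivAt_sqrt ht0).comp_hasFDerivAt q₁ hsq
  -- derivative of q ↦ ⟪q, z₂⟫
  have hlin : HasFDerivAt (fun q : EuclideanSpace ℝ (Fin C) => ⟪q, z₂⟫)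
      ((fderivInnerCLM ℝ (q₁, z₂)).comp
        ((ContinuousLinearMap.id ℝ (EuclideanSpace ℝ (Fin C))).prod (0 : EuclideanSpace ℝ (Fin C) →L[ℝ] EuclideanSpace ℝ (Fin C)))) q₁ :=
    (hasFDerivAt_id q₁).inner ℝ (hasFDerivAt_const z₂ q₁)
  have hsne : Real.sqrt t ≠ 0 := by rw [hsqrt_t]; exact hn
  have hinv : HasFDerivAt (fun q : EuclideanSpace ℝ (Fin C) => (Real.sqrt ⟪q, q⟫)⁻¹) _ q₁ :=
    (hasDerivAt_inv hsne).comp_hasFDerivAt q₁ hnorm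
  have hf : HasFDerivAt (fun q : EuclideanSpace ℝ (Fin C) => -((Real.sqrt ⟪q, q⟫)⁻¹ * ⟪q, z₂⟫)) _ q₁ :=
    (hinv.mul hlin).neg
  -- the gradient vector
  set g : EuclideanSpace ℝ (Fin C) := (⟪q₁, z₂⟫ / ‖q₁‖ ^ 3) • q₁ - ‖q₁‖⁻¹ • z₂ with hg
  have hgrad : HasGradientAt (fun q : EuclideanSpace ℝ (Fin C) => -⟪‖q‖⁻¹ • q, z₂⟫) g q₁ := by
    rw [hasGradientAt_iff_hasFDerivAt]
    have heq : (fun q : EuclideanSpace ℝ (Fin C) => -⟪‖q‖⁻¹ • q, z₂⟫)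
        = fun q : EuclideanSpace ℝ (Fin C) => -((Real.sqrt ⟪q, q⟫)⁻¹ * ⟪q, z₂⟫) := by
      funext q
      rw [real_inner_smul_left, real_inner_self_eq_norm_mul_norm,
        Real.sqrt_mul_self (norm_nonneg _)]
    rw [heq]
    have hD : InnerProductSpace.toDual ℝ (EuclideanSpace ℝ (Fin C)) g
        = -((Real.sqrt ⟪q₁, q₁⟫)⁻¹ •
              (fderivInnerCLM ℝ (q₁, z₂)).comp
                ((ContinuousLinearMap.id ℝ (EuclideanSpace ℝ (Fin C))).prod 0) +
            ⟪q₁, z₂⟫ •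
              -(Real.sqrt t ^ 2)⁻¹ •
                (1 / (2 * Real.sqrt t)) •
                  (fderivInnerCLM ℝ (q₁, q₁)).comp
                    ((ContinuousLinearMap.id ℝ (EuclideanSpace ℝ (Fin C))).prod
                      (ContinuousLinearMap.id ℝ (EuclideanSpace ℝ (Fin C))))) := by
      apply ContinuousLinearMap.ext
      intro v
      simp only [InnerProductSpace.toDual_apply_apply, ContinuousLinearMap.neg_apply,
        ContinuousLinearMap.add_apply,
        ContinuousLinearMap.smul_apply, ContinuousLinearMap.comp_apply,
        ContinuousLinearMap.prod_apply, ContinuousLinearMap.coe_id', id_eq,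
        ContinuousLinearMap.zero_apply, fderivInnerCLM_apply, smul_eq_mul]
      rw [hg, inner_sub_left, real_inner_smul_left, real_inner_smul_left,
        hsqrt_t, inner_zero_right, real_inner_comm q₁ v, real_inner_comm z₂ v]
      generalize ⟪q₁, z₂⟫ = a
      generalize ⟪v, q₁⟫ = b
      generalize ⟪v, z₂⟫ = d
      field_simp
      ring
    rw [hD]
    exact hf
  have hgv : gradient (fun q : EuclideanSpace ℝ (Fin C) => -⟪‖q‖⁻¹ • q, z₂⟫) q₁ = g := hgrad.gradient
  have hkey : ‖g‖ ^ 2 = (1 / ‖q₁‖ ^ 2) * (1 - ⟪‖q₁‖⁻¹ • q₁, z₂⟫ ^ 2) := by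
    have : ‖g‖ ^ 2 = ⟪g, g⟫ := (real_inner_self_eq_norm_sq g).symm
    rw [this, hg]
    simp only [inner_sub_left, inner_sub_right, real_inner_smul_left,
      real_inner_smul_right]
    rw [real_inner_comm z₂ q₁, real_inner_self_eq_norm_mul_norm q₁,
      real_inner_self_eq_norm_mul_norm z₂, hz]
    generalize ⟪z₂, q₁⟫ = a
    field_simp
    ring
  constructor
  · rw [hgv]; exact hkey
  · rw [hgv, hkey]
    have hsq : ⟪‖q₁‖⁻¹ • q₁, z₂⟫ ^ 2 ≥ 0 := sq_nonneg _
    have h2 : (0:ℝ) < ‖q₁‖ ^ 2 := by positivity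
    nlinarith [one_div_pos.mpr h2]
end

section
/- For the modified cross-entropy loss L_mce = −∑_i p(i|z₂,τ)·(q̃₁_i/τ) with q̃₁ = q₁/‖q₁‖, the squared gradient norm with respect to q₁ equals (‖P(z₂)‖²/(τ²‖q₁‖²))·(1 − ⟨q̃₁, P(z₂)/‖P(z₂)‖⟩²), and hence ‖∇_{q₁}L_mce‖ ≤ ‖P(z₂)‖/(τ‖q₁‖). -/
open scoped BigOperators
open RealInnerProductSpace

noncomputable def softmax7 {C : ℕ} (τ : ℝ) (x : EuclideanSpace ℝ (Fin C)) :
    EuclideanSpace ℝ (Fin C) :=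
  WithLp.toLp 2 (fun i => Real.exp (x i / τ) / ∑ j, Real.exp (x j / τ))

section aux
variable {C : ℕ}

lemma softmax7_pos {C : ℕ} (hC : 1 ≤ C) (τ : ℝ) (z : EuclideanSpace ℝ (Fin C)) (i : Fin C) :
    0 < softmax7 τ z i := by
  have : (0:ℝ) < ∑ j, Real.exp (z j / τ) := by
    apply Finset.sum_pos (fun j _ => Real.exp_pos _)
    simp [Finset.univ_nonempty_iff, Fin.pos_iff_nonempty]
    exact Fin.pos_iff_nonempty.mp hC
  show 0 < Real.exp (z i / τ) / ∑ j, Real.exp (z j / τ)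
  exact div_pos (Real.exp_pos _) this

lemma hasFDerivAt_norm' (q₁ : EuclideanSpace ℝ (Fin C)) (hq : q₁ ≠ 0) :
    HasFDerivAt (fun q : EuclideanSpace ℝ (Fin C) => ‖q‖)
      (‖q₁‖⁻¹ • innerSL ℝ q₁) q₁ := by
  have ha : ‖q₁‖ ≠ 0 := norm_ne_zero_iff.mpr hq
  have h1 : HasFDerivAt (fun q : EuclideanSpace ℝ (Fin C) => ‖q‖ ^ 2)
      (2 • (innerSL ℝ q₁)) q₁ := by
    simpa using (hasFDerivAt_id q₁).norm_sq
  have h2 : HasDerivAt Real.sqrt (1 / (2 * Real.sqrt (‖q₁‖ ^ 2))) (‖q₁‖ ^ 2) := by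
    exact Real.hasDerivAt_sqrt (by positivity)
  have h3 := h2.comp_hasFDerivAt q₁ h1
  have heq : (fun q : EuclideanSpace ℝ (Fin C) => Real.sqrt (‖q‖ ^ 2))
      = fun q => ‖q‖ := by
    funext q; exact Real.sqrt_sq (norm_nonneg q)
  have h3' : HasFDerivAt (fun q : EuclideanSpace ℝ (Fin C) => Real.sqrt (‖q‖ ^ 2))
      ((1 / (2 * Real.sqrt (‖q₁‖ ^ 2))) • 2 • (innerSL ℝ) q₁) q₁ := h3
  rw [heq] at h3'
  refine h3'.congr_fderiv ?_
  rw [Real.sqrt_sq (norm_nonneg q₁)]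
  ext v
  simp [ContinuousLinearMap.smul_apply, two_smul]
  field_simp
  ring

end aux

theorem stmt_7 {C : ℕ} (hC : 1 ≤ C) (τ : ℝ) (hτ : 0 < τ)
    (q₁ z₂ : EuclideanSpace ℝ (Fin C)) (hq : q₁ ≠ 0) :
    ‖gradient (fun q : EuclideanSpace ℝ (Fin C) =>
        -(1 / τ) * ⟪‖q‖⁻¹ • q, softmax7 τ z₂⟫) q₁‖ ^ 2
        = ‖softmax7 τ z₂‖ ^ 2 / (τ ^ 2 * ‖q₁‖ ^ 2) *
            (1 - ⟪‖q₁‖⁻¹ • q₁, ‖softmax7 τ z₂‖⁻¹ • softmax7 τ z₂⟫ ^ 2) ∧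
      ‖gradient (fun q : EuclideanSpace ℝ (Fin C) =>
        -(1 / τ) * ⟪‖q‖⁻¹ • q, softmax7 τ z₂⟫) q₁‖
        ≤ ‖softmax7 τ z₂‖ / (τ * ‖q₁‖) := by
  set p := softmax7 τ z₂ with hp
  set a := ‖q₁‖ with haa
  have ha : a ≠ 0 := norm_ne_zero_iff.mpr hq
  have ha0 : 0 < a := norm_pos_iff.mpr hq
  have hpne : p ≠ 0 := by
    intro h
    have := softmax7_pos hC τ z₂ ⟨0, hC⟩
    rw [← hp, h] at this
    simp at this
  have hnp : ‖p‖ ≠ 0 := norm_ne_zero_iff.mpr hpne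
  -- the gradient
  set G : EuclideanSpace ℝ (Fin C) :=
    (-(1/τ)) • (a⁻¹ • p + (⟪p, q₁⟫ * (-(a^2)⁻¹ * a⁻¹)) • q₁) with hG
  have hGrad : HasGradientAt (fun q : EuclideanSpace ℝ (Fin C) =>
      -(1 / τ) * ⟪‖q‖⁻¹ • q, p⟫) G q₁ := by
    have hinv : HasFDerivAt (fun q : EuclideanSpace ℝ (Fin C) => ‖q‖⁻¹)
        ((-(a^2)⁻¹) • (a⁻¹ • innerSL ℝ q₁)) q₁ := by
      have := (hasDerivAt_inv ha).comp_hasFDerivAt q₁ (hasFDerivAt_norm' q₁ hq)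
      simpa [smul_smul, Function.comp_def, ← haa] using this
    have hin : HasFDerivAt (fun q : EuclideanSpace ℝ (Fin C) => ⟪p, q⟫)
        (innerSL ℝ p) q₁ := (innerSL ℝ p).hasFDerivAt
    have hmul := (hinv.mul hin).const_mul (-(1/τ))
    have heq : (fun q : EuclideanSpace ℝ (Fin C) => -(1/τ) * (‖q‖⁻¹ * ⟪p, q⟫))
        = fun q => -(1 / τ) * ⟪‖q‖⁻¹ • q, p⟫ := by
      funext q
      rw [real_inner_smul_left, real_inner_comm]
    simp only [Pi.mul_apply] at hmul
    rw [heq] at hmul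
    rw [hasGradientAt_iff_hasFDerivAt]
    refine hmul.congr_fderiv ?_
    ext v
    simp [hG, inner_smul_left, inner_add_left, inner_smul_left, real_inner_comm q₁ v]
    ring_nf
    rw [← haa]
    ring
  have hgr : gradient (fun q : EuclideanSpace ℝ (Fin C) =>
      -(1 / τ) * ⟪‖q‖⁻¹ • q, p⟫) q₁ = G := hGrad.gradient
  rw [hgr]
  set s : ℝ := ⟪p, q₁⟫ with hs
  have hc : (⟪q₁, p⟫ : ℝ) = s := by rw [hs]; exact (real_inner_comm q₁ p).symm
  have hGn : ‖G‖ ^ 2 = (1/τ^2) * (‖p‖^2 / a^2 - s^2 / a^4) := by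
    have h1 : ‖G‖^2 = (1/τ)^2 * ‖a⁻¹ • p + (s * (-(a^2)⁻¹ * a⁻¹)) • q₁‖^2 := by
      rw [hG, norm_smul]
      simp [mul_pow]
    rw [h1, norm_add_sq_real, norm_smul, norm_smul, real_inner_smul_left,
      real_inner_smul_right, ← hs]
    simp only [Real.norm_eq_abs, mul_pow, sq_abs, ← haa]
    field_simp
    ring
  have hcs : s^2 ≤ ‖p‖^2 * a^2 := by
    have := abs_real_inner_le_norm p q₁
    calc s^2 = |s|^2 := (sq_abs s).symm
      _ ≤ (‖p‖ * ‖q₁‖)^2 := by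
          apply pow_le_pow_left₀ (abs_nonneg _) this
      _ = ‖p‖^2 * a^2 := by rw [haa]; ring
  have hmain : ‖G‖ ^ 2 = ‖p‖ ^ 2 / (τ ^ 2 * a ^ 2) * (1 - ⟪a⁻¹ • q₁, ‖p‖⁻¹ • p⟫ ^ 2) := by
    rw [hGn, real_inner_smul_left, real_inner_smul_right, real_inner_comm, ← hs]
    field_simp
  refine ⟨hmain, ?_⟩
  have hb : (0:ℝ) ≤ ‖p‖ / (τ * a) := by positivity
  have hsq : ‖G‖^2 ≤ (‖p‖ / (τ * a))^2 := by
    rw [hGn]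
    rw [div_pow]
    rw [mul_pow]
    have : (1/τ^2) * (‖p‖^2 / a^2 - s^2/a^4) ≤ (1/τ^2) * (‖p‖^2/a^2) := by
      apply mul_le_mul_of_nonneg_left _ (by positivity)
      have : 0 ≤ s^2 / a^4 := by positivity
      linarith
    calc (1/τ^2) * (‖p‖^2 / a^2 - s^2/a^4) ≤ (1/τ^2) * (‖p‖^2/a^2) := this
      _ = ‖p‖^2 / (τ^2 * a^2) := by ring
  exact (pow_le_pow_iff_left₀ (norm_nonneg _) hb (by norm_num)).mp hsq
end
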